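/- For every ε > 0 there is a δ > 0 such that whenever V is a finite set and G is a graph on vertex set V (a set of 2-element subsets of V) containing at most δ·|V|^3 triangles (a triangle being a 3-element set {x,y,z} ⊆ V with {x,y}, {x,z}, {y,z} all in G), there is a set C ⊆ G with |C| ≤ ε·|V|^2 such that the graph G ∖ C contains no triangles at all. -/

import Mathlib

open scoped Classical
open Finset SimpleGraph

set_option linter.unusedSectionVars false
section helpers
variable {V : Type} [Fintype V]

noncomputable def pairFinset : Sym2 V → Finset V :=
  Sym2.lift ⟨fun x y => {x, y}, fun x y => Finset.pair_comm x y⟩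

@[simp] lemma pairFinset_mk (x y : V) : pairFinset s(x, y) = ({x, y} : Finset V) := rfl

lemma pair_cases {a b x y : V} (hab : a ≠ b) (h : ({a, b} : Finset V) = {x, y}) :
    (a = x ∧ b = y) ∨ (a = y ∧ b = x) := by
  have ha : a = x ∨ a = y := by
    have : a ∈ ({x, y} : Finset V) := h ▸ mem_insert_self a {b}
    simpa using this
  have hb : b = x ∨ b = y := by
    have : b ∈ ({x, y} : Finset V) := h ▸ (by simp : b ∈ ({a, b} : Finset V))
    simpa using this
  rcases ha with rfl | rfl <;> rcases hb with rfl | rfl <;> simp_all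

lemma mem_image_pairFinset (H : SimpleGraph V) [DecidableRel H.Adj] (x y : V) :
    ({x, y} : Finset V) ∈ H.edgeFinset.image pairFinset ↔ H.Adj x y := by
  constructor
  · intro h
    obtain ⟨e, he, hfe⟩ := mem_image.1 h
    induction e using Sym2.ind with
    | _ a b =>
      rw [mem_edgeFinset, mem_edgeSet] at he
      rw [pairFinset_mk] at hfe
      rcases pair_cases (H.ne_of_adj he) hfe with ⟨rfl, rfl⟩ | ⟨rfl, rfl⟩
      · exact he
      · exact he.symm
  · intro h
    exact mem_image.2 ⟨s(x, y), by rw [mem_edgeFinset, mem_edgeSet]; exact h, rfl⟩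

lemma card_image_pairFinset (H : SimpleGraph V) [DecidableRel H.Adj] :
    (H.edgeFinset.image pairFinset).card = H.edgeFinset.card := by
  refine card_image_of_injOn ?_
  intro e₁ h₁ e₂ h₂ heq
  induction e₁ using Sym2.ind with
  | _ a b =>
    induction e₂ using Sym2.ind with
    | _ c d =>
      rw [mem_coe, mem_edgeFinset, mem_edgeSet] at h₁ h₂
      rw [pairFinset_mk, pairFinset_mk] at heq
      rcases pair_cases (H.ne_of_adj h₁) heq with ⟨rfl, rfl⟩ | ⟨rfl, rfl⟩
      · rfl
      · exact Sym2.eq_swap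

lemma filter_eq_cliqueFinset (H : Finset (Finset V)) (SH : SimpleGraph V) [DecidableRel SH.Adj]
    (h : ∀ x y, SH.Adj x y ↔ x ≠ y ∧ ({x, y} : Finset V) ∈ H) :
    ((Finset.univ : Finset (Finset V)).filter
        (fun t => t.card = 3 ∧ ∀ e ⊆ t, e.card = 2 → e ∈ H)) = SH.cliqueFinset 3 := by
  ext t
  simp only [mem_filter, mem_univ, true_and, mem_cliqueFinset_iff, isNClique_iff,
    isClique_iff, Set.Pairwise, Finset.mem_coe]
  constructor
  · rintro ⟨h3, he⟩
    refine ⟨fun x hx y hy hxy => (h x y).2 ⟨hxy, he {x, y} ?_ (card_pair hxy)⟩, h3⟩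
    rw [insert_subset_iff]
    exact ⟨hx, singleton_subset_iff.2 hy⟩
  · rintro ⟨hcl, h3⟩
    refine ⟨h3, fun e het hcard => ?_⟩
    obtain ⟨x, y, hxy, rfl⟩ := card_eq_two.1 hcard
    exact ((h x y).1 (hcl (het (mem_insert_self x {y})) (het (by simp)) hxy)).2

end helpers

/-- **Triangle removal lemma.** For every `ε > 0` there is `δ > 0` such that any graph `G`
(a set of 2-element subsets of a finite vertex set `V`) with at most `δ·|V|^3` triangles
can be made triangle-free by removing a set `C ⊆ G` of at most `ε·|V|^2` edges. -/
theorem triangle_removal :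
    ∀ ε : ℝ, 0 < ε → ∃ δ : ℝ, 0 < δ ∧
      ∀ (V : Type) [Fintype V] (G : Finset (Finset V)),
        (∀ e ∈ G, e.card = 2) →
        (((Finset.univ : Finset (Finset V)).filter
            (fun t => t.card = 3 ∧ ∀ e ⊆ t, e.card = 2 → e ∈ G)).card : ℝ)
          ≤ δ * (Fintype.card V : ℝ) ^ 3 →
        ∃ C ⊆ G, (C.card : ℝ) ≤ ε * (Fintype.card V : ℝ) ^ 2 ∧
          ((Finset.univ : Finset (Finset V)).filter
            (fun t => t.card = 3 ∧ ∀ e ⊆ t, e.card = 2 → e ∈ G \ C)).card = 0 := by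
  intro ε hε
  set ε' := min ε 1 with hε'def
  have hε'0 : 0 < ε' := lt_min hε one_pos
  have hε'1 : ε' ≤ 1 := min_le_right _ _
  have hb : 0 < SimpleGraph.triangleRemovalBound ε' := triangleRemovalBound_pos hε'0
  refine ⟨SimpleGraph.triangleRemovalBound ε' / 2, by positivity, ?_⟩
  intro V _ G hG2 htri
  by_cases hV : Fintype.card V = 0
  · refine ⟨∅, empty_subset _, by simp; positivity, ?_⟩
    rw [Finset.card_eq_zero, Finset.filter_eq_empty_iff]
    intro t _
    rintro ⟨h3, -⟩
    have : t.card ≤ Fintype.card V := Finset.card_le_univ t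
    omega
  · -- main case
    have hn : (0:ℝ) < (Fintype.card V : ℝ) ^ 3 := by positivity
    let SG : SimpleGraph V :=
      { Adj := fun x y => x ≠ y ∧ ({x, y} : Finset V) ∈ G
        symm := ⟨fun x y h => ⟨h.1.symm, by rw [Finset.pair_comm]; exact h.2⟩⟩
        loopless := ⟨fun x h => h.1 rfl⟩ }
    haveI : DecidableRel SG.Adj := Classical.decRel _
    have hadj : ∀ x y, SG.Adj x y ↔ x ≠ y ∧ ({x, y} : Finset V) ∈ G := fun x y => Iff.rfl
    have hfilter := filter_eq_cliqueFinset G SG hadj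
    have hlt : ((SG.cliqueFinset 3).card : ℝ) <
        SimpleGraph.triangleRemovalBound ε' * (Fintype.card V : ℕ) ^ 3 := by
      rw [← hfilter]
      push_cast
      calc ((Finset.univ.filter _).card : ℝ) ≤ _ := htri
        _ < SimpleGraph.triangleRemovalBound ε' * (Fintype.card V : ℝ) ^ 3 := by
          rw [div_mul_eq_mul_div]
          linarith [mul_pos hb hn]
    obtain ⟨G'', hle, _, hcard, hfree⟩ := SimpleGraph.triangle_removal hlt
    -- the image of edges of SG is G
    have hEG : SG.edgeFinset.image pairFinset = G := by
      ext e
      constructor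
      · intro he
        obtain ⟨e', he', rfl⟩ := mem_image.1 he
        induction e' using Sym2.ind with
        | _ a b =>
          rw [mem_edgeFinset, mem_edgeSet] at he'
          exact he'.2
      · intro he
        obtain ⟨x, y, hxy, rfl⟩ := card_eq_two.1 (hG2 e he)
        exact (mem_image_pairFinset SG x y).2 ⟨hxy, he⟩
    set E := G''.edgeFinset.image pairFinset with hE
    have hEsub : E ⊆ G := by
      intro e he
      obtain ⟨e', he', rfl⟩ := mem_image.1 he
      induction e' using Sym2.ind with
      | _ a b =>
        rw [mem_edgeFinset, mem_edgeSet] at he'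
        exact (hle he').2
    refine ⟨G \ E, sdiff_subset, ?_, ?_⟩
    · have h1 : ((G \ E).card : ℝ) = (G.card : ℝ) - (E.card : ℝ) := by
        rw [card_sdiff_of_subset hEsub]
        push_cast [Nat.cast_sub (card_le_card hEsub)]
        ring_nf
      have h2 : G.card = SG.edgeFinset.card := by rw [← hEG, card_image_pairFinset]
      have h3 : E.card = G''.edgeFinset.card := card_image_pairFinset G''
      rw [h1, h2, h3]
      have : (ε' : ℝ) * (Fintype.card V : ℕ) ^ 2 ≤ ε * (Fintype.card V : ℝ) ^ 2 := by
        push_cast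
        have : ε' ≤ ε := min_le_left _ _
        nlinarith [sq_nonneg ((Fintype.card V : ℝ))]
      push_cast at hcard
      linarith [hcard]
    · have hGC : G \ (G \ E) = E := by
        rw [sdiff_sdiff_self_left, inter_eq_right.2 hEsub]
      rw [hGC]
      have hadj'' : ∀ x y, G''.Adj x y ↔ x ≠ y ∧ ({x, y} : Finset V) ∈ E := by
        intro x y
        rw [hE, mem_image_pairFinset]
        exact ⟨fun h => ⟨G''.ne_of_adj h, h⟩, fun h => h.2⟩
      rw [filter_eq_cliqueFinset E G'' hadj'', Finset.card_eq_zero,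
        SimpleGraph.cliqueFinset_eq_empty_iff]
      exact hfree
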